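/- Let k be a field, G a group, K ≤ G a subgroup, and S ⊆ G a set of double coset representatives, i.e. G is the disjoint union of the double cosets KsK for s ∈ S. Let W be a k-linear representation of K. For s ∈ S let K^s = K ∩ s⁻¹Ks act on W by κ ∗_s w = (sκs⁻¹)·w, and write W^s for the resulting representation of K^s. Then the map f ↦ (f_s)_{s∈S}, where f_s(κ) = f(sκ) for κ ∈ K, is a K-equivariant k-linear isomorphism I_K^G W ≅ ∏_{s∈S} I_{K^s}^K W^s, where K acts on the source and on each factor of the target by right translation. -/

import Mathlib

noncomputable section

universe u

variable {k : Type u} [Field k] {G : Type u} [Group G]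

/-- The full induction `I_K^G W`: all functions `f : G → W` with `f (κ g) = κ • f g`,
with `G` acting by right translation. -/
def IndFull (k : Type u) [Field k] {G : Type u} [Group G] (K : Subgroup G)
    {W : Type u} [AddCommGroup W] [Module k W] (ρ : Representation k ↥K W) :
    Submodule k (G → W) where
  carrier := {f | ∀ (κ : ↥K) (g : G), f ((κ : G) * g) = ρ κ (f g)}
  add_mem' := by
    intro f g hf hg κ x
    simp [hf κ x, hg κ x]
  zero_mem' := by intro κ x; simp
  smul_mem' := by
    intro c f hf κ x
    simp [hf κ x]

/-- `K^s = K ∩ s⁻¹Ks`. -/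
def Kconj (K : Subgroup G) (s : G) : Subgroup G :=
  K ⊓ K.map (MulAut.conj s⁻¹).toMonoidHom

/-- The homomorphism `K^s → K`, `κ ↦ sκs⁻¹` (through which `K^s` acts on `W^s`). -/
def conjIntoK (K : Subgroup G) (s : G) : ↥((Kconj K s).subgroupOf K) →* ↥K where
  toFun κ :=
    ⟨s * ((κ : ↥K) : G) * s⁻¹, by
      have h2 : ((κ : ↥K) : G) ∈ K.map (MulAut.conj s⁻¹).toMonoidHom :=
        (Subgroup.mem_subgroupOf.mp κ.2).2
      obtain ⟨x, hxK, hx⟩ := h2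
      have hxe : s * ((κ : ↥K) : G) * s⁻¹ = x := by
        rw [← hx]
        simp only [MulEquiv.coe_toMonoidHom, MulAut.conj_apply]
        group
      rw [hxe]; exact hxK⟩
  map_one' := by
    ext
    simp
  map_mul' κ₁ κ₂ := by
    ext
    show s * (((κ₁ * κ₂ : _) : ↥K) : G) * s⁻¹ = (s * _ * s⁻¹) * (s * _ * s⁻¹)
    push_cast
    group

/-- `W^s`: the representation of `K^s ≤ K` on `W` given by `κ ∗ w = (sκs⁻¹) • w`. -/
def repConj (K : Subgroup G) (s : G) {W : Type u} [AddCommGroup W] [Module k W]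
    (ρ : Representation k ↥K W) : Representation k ↥((Kconj K s).subgroupOf K) W :=
  ρ.comp (conjIntoK K s)

/-- Well-definedness: value `ρ a (h b)` only depends on `a s b`. -/
lemma welldef (K : Subgroup G) (s : G) {W : Type u} [AddCommGroup W] [Module k W]
    (ρ : Representation k ↥K W) (h : ↥K → W)
    (hh : h ∈ IndFull k ((Kconj K s).subgroupOf K) (repConj K s ρ))
    (a b a' b' : ↥K) (heq : (a : G) * s * b = (a' : G) * s * b') :
    ρ a (h b) = ρ a' (h b') := by
  have hG : s * ((b' : G) * (b : G)⁻¹) * s⁻¹ = (a' : G)⁻¹ * a := by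
    calc s * ((b' : G) * (b : G)⁻¹) * s⁻¹
        = (a' : G)⁻¹ * ((a' : G) * s * b') * (b : G)⁻¹ * s⁻¹ := by group
      _ = (a' : G)⁻¹ * ((a : G) * s * b) * (b : G)⁻¹ * s⁻¹ := by rw [heq]
      _ = (a' : G)⁻¹ * a := by group
  have hκmem : ((b' * b⁻¹ : ↥K) : G) ∈ Kconj K s := by
    rw [Kconj, Subgroup.mem_inf]
    refine ⟨(b' * b⁻¹ : ↥K).2, ?_⟩
    rw [Subgroup.mem_map]
    refine ⟨(a' : G)⁻¹ * a, mul_mem (inv_mem a'.2) a.2, ?_⟩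
    simp only [MulEquiv.coe_toMonoidHom, MulAut.conj_apply]
    rw [← hG]
    push_cast
    group
  set κ' : ↥((Kconj K s).subgroupOf K) := ⟨b' * b⁻¹, Subgroup.mem_subgroupOf.mpr hκmem⟩
    with hκ'
  have hb' : b' = (κ' : ↥K) * b := by
    rw [hκ']
    simp
  have key := hh κ' b
  rw [hb', key]
  rw [show (repConj K s ρ) κ' = ρ (conjIntoK K s κ') from rfl,
    ← Module.End.mul_apply, ← map_mul]
  have hac : a' * conjIntoK K s κ' = a := by
    ext
    show (a' : G) * (s * ((κ' : ↥K) : G) * s⁻¹) = a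
    have hcoe : s * ((κ' : ↥K) : G) * s⁻¹ = (a' : G)⁻¹ * a := by
      rw [hκ']
      push_cast
      exact hG
    rw [hcoe]
    group
  rw [hac]

section DoubleCoset

variable (K : Subgroup G) (S : Set G)
    (hS : ∀ g : G, ∃! s : G, s ∈ S ∧ ∃ a ∈ K, ∃ b ∈ K, g = a * s * b)

/-- The chosen double-coset representative of `g`. -/
def sig (g : G) : G := (hS g).exists.choose

lemma sig_mem (g : G) : sig K S hS g ∈ S := (hS g).exists.choose_spec.1

lemma sig_decomp (g : G) : ∃ a ∈ K, ∃ b ∈ K, g = a * sig K S hS g * b :=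
  (hS g).exists.choose_spec.2

lemma sig_unique (g : G) (s : G) (hs : s ∈ S)
    (hd : ∃ a ∈ K, ∃ b ∈ K, g = a * s * b) : s = sig K S hS g :=
  (hS g).unique ⟨hs, hd⟩ ⟨sig_mem K S hS g, sig_decomp K S hS g⟩

/-- The chosen `a`. -/
def aEl (g : G) : ↥K := ⟨(sig_decomp K S hS g).choose, (sig_decomp K S hS g).choose_spec.1⟩

/-- The chosen `b`. -/
def bEl (g : G) : ↥K :=
  ⟨(sig_decomp K S hS g).choose_spec.2.choose,
    (sig_decomp K S hS g).choose_spec.2.choose_spec.1⟩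

lemma decomp_eq (g : G) :
    g = (aEl K S hS g : G) * sig K S hS g * bEl K S hS g :=
  (sig_decomp K S hS g).choose_spec.2.choose_spec.2

variable {W : Type u} [AddCommGroup W] [Module k W] (ρ : Representation k ↥K W)

/-- The inverse map of `Φ`. -/
def invMap
    (h : ∀ s : S, ↥(IndFull k ((Kconj K (s : G)).subgroupOf K) (repConj K (s : G) ρ)))
    (g : G) : W :=
  ρ (aEl K S hS g) ((h ⟨sig K S hS g, sig_mem K S hS g⟩).1 (bEl K S hS g))

lemma invMap_spec
    (h : ∀ s : S, ↥(IndFull k ((Kconj K (s : G)).subgroupOf K) (repConj K (s : G) ρ)))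
    (g : G) (s : G) (hs : s ∈ S) (a b : ↥K) (hg : g = (a : G) * s * b) :
    invMap K S hS ρ h g = ρ a ((h ⟨s, hs⟩).1 b) := by
  have hse : s = sig K S hS g :=
    sig_unique K S hS g s hs ⟨a, a.2, b, b.2, hg⟩
  subst hse
  exact welldef K (sig K S hS g) ρ _ (h ⟨sig K S hS g, hs⟩).2
    (aEl K S hS g) (bEl K S hS g) a b ((decomp_eq K S hS g).symm.trans hg)

end DoubleCoset

lemma invMap_mem (K : Subgroup G) (S : Set G)
    (hS : ∀ g : G, ∃! s : G, s ∈ S ∧ ∃ a ∈ K, ∃ b ∈ K, g = a * s * b)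
    {W : Type u} [AddCommGroup W] [Module k W] (ρ : Representation k ↥K W)
    (h : ∀ s : S, ↥(IndFull k ((Kconj K (s : G)).subgroupOf K) (repConj K (s : G) ρ))) :
    invMap K S hS ρ h ∈ IndFull k K ρ := by
  intro κ g
  rw [invMap_spec K S hS ρ h ((κ : G) * g) (sig K S hS g) (sig_mem K S hS g)
      (κ * aEl K S hS g) (bEl K S hS g)
      (by push_cast; conv_lhs => rw [decomp_eq K S hS g]; rw [← mul_assoc, ← mul_assoc]),
    invMap_spec K S hS ρ h g (sig K S hS g) (sig_mem K S hS g)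
      (aEl K S hS g) (bEl K S hS g) (decomp_eq K S hS g),
    map_mul]
  rfl

lemma fwd_mem (K : Subgroup G) {W : Type u} [AddCommGroup W] [Module k W]
    (ρ : Representation k ↥K W) (f : ↥(IndFull k K ρ)) (s : G) :
    (fun κ : ↥K => f.1 (s * κ)) ∈
      IndFull k ((Kconj K s).subgroupOf K) (repConj K s ρ) := by
  intro κ₀ g
  show f.1 (s * (((κ₀ : ↥K) : G) * g)) = ρ (conjIntoK K s κ₀) (f.1 (s * g))
  rw [show s * (((κ₀ : ↥K) : G) * (g : G)) =
      ((conjIntoK K s κ₀ : ↥K) : G) * (s * g) by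
    show _ = (s * _ * s⁻¹) * _
    group]
  exact f.2 _ _


/-- Let `S ⊆ G` be a set of representatives for the double cosets `K\G/K`
(each `g ∈ G` lies in `KsK` for a unique `s ∈ S`), and `W` a `k`-linear representation of
`K`.  Then `f ↦ (f_s)_{s ∈ S}`, `f_s(κ) = f(sκ)`, is a `K`-equivariant `k`-linear
isomorphism `I_K^G W ≅ ∏_{s ∈ S} I_{K^s}^K W^s`, where `K` acts everywhere by right
translation.  We state: the two closure properties making the right-translation action of
`K` on source and target well defined, and the existence of a linear equivalence `Φ` given
by the formula `(Φ f) s κ = f (s κ)` (which is then automatically `K`-equivariant, as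
recorded in the last clause). -/
theorem stmt1 (K : Subgroup G) (S : Set G)
    (hS : ∀ g : G, ∃! s : G, s ∈ S ∧ ∃ a ∈ K, ∃ b ∈ K, g = a * s * b)
    (W : Type u) [AddCommGroup W] [Module k W] (ρ : Representation k ↥K W) :
    (∀ (κ₀ : ↥K) (f : G → W), f ∈ IndFull k K ρ →
      (fun x => f (x * (κ₀ : G))) ∈ IndFull k K ρ) ∧
    (∀ (s : S) (κ₀ : ↥K) (h : ↥K → W),
      h ∈ IndFull k ((Kconj K (s : G)).subgroupOf K) (repConj K (s : G) ρ) →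
      (fun κ => h (κ * κ₀)) ∈ IndFull k ((Kconj K (s : G)).subgroupOf K)
        (repConj K (s : G) ρ)) ∧
    ∃ Φ : ↥(IndFull k K ρ) ≃ₗ[k]
        (∀ s : S, ↥(IndFull k ((Kconj K (s : G)).subgroupOf K) (repConj K (s : G) ρ))),
      (∀ (f : ↥(IndFull k K ρ)) (s : S) (κ : ↥K),
        ((Φ f) s).1 κ = f.1 ((s : G) * (κ : G))) ∧
      (∀ (κ₀ : ↥K) (f : ↥(IndFull k K ρ))
        (h : (fun x => f.1 (x * (κ₀ : G))) ∈ IndFull k K ρ) (s : S) (κ : ↥K),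
        ((Φ ⟨fun x => f.1 (x * (κ₀ : G)), h⟩) s).1 κ = ((Φ f) s).1 (κ * κ₀)) := by
  refine ⟨?_, ?_, ?_⟩
  · intro κ₀ f hf κ x
    show f ((κ : G) * x * κ₀) = ρ κ (f (x * κ₀))
    rw [mul_assoc]
    exact hf κ (x * κ₀)
  · intro s κ₀ h hh κ κ'
    show h ((κ : ↥K) * κ' * κ₀) = _
    rw [mul_assoc]
    exact hh κ (κ' * κ₀)
  · refine ⟨{ toFun := fun f s => ⟨fun κ => f.1 ((s : G) * κ), fwd_mem K ρ f (s : G)⟩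
              map_add' := fun f g => rfl
              map_smul' := fun c f => rfl
              invFun := fun h => ⟨invMap K S hS ρ h, invMap_mem K S hS ρ h⟩
              left_inv := ?_
              right_inv := ?_ }, fun f s κ => rfl, ?_⟩
    · intro f
      apply Subtype.ext
      funext g
      show invMap K S hS ρ (fun s => ⟨fun κ => f.1 ((s : G) * κ), fwd_mem K ρ f (s : G)⟩) g = f.1 g
      rw [invMap_spec K S hS ρ _ g (sig K S hS g) (sig_mem K S hS g)
          (aEl K S hS g) (bEl K S hS g) (decomp_eq K S hS g)]
      show ρ (aEl K S hS g) (f.1 (sig K S hS g * bEl K S hS g)) = f.1 g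
      rw [← f.2 (aEl K S hS g) (sig K S hS g * bEl K S hS g)]
      rw [← mul_assoc, ← decomp_eq K S hS g]
    · intro h
      funext s
      apply Subtype.ext
      funext κ
      show invMap K S hS ρ h ((s : G) * κ) = (h s).1 κ
      rw [invMap_spec K S hS ρ h ((s : G) * κ) (s : G) s.2 1 κ (by simp)]
      rw [map_one]
      rfl
    · intro κ₀ f h s κ
      show f.1 (((s : G) * κ) * κ₀) = f.1 ((s : G) * ((κ : G) * κ₀))
      rw [mul_assoc]
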